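/- For integers d ≥ 2 and n ≥ 1, the function f_{d,n}(r) = (r - r^d)/(r^{d+1}+n)^{d/(d+1)} is strictly increasing on [0, ρ] and strictly decreasing on [ρ, ∞), where ρ = ρ(d,n) is the unique positive root of (d-1)ρ^{d+1} + dnρ^{d-1} - n = 0. -/

import Mathlib

open Real Set

private lemma f_deriv_aux (d n : ℕ) (hd : 2 ≤ d) (r : ℝ)
    (hA : 0 < r ^ (d + 1) + (n : ℝ)) :
    HasDerivAt (fun r : ℝ => (r - r ^ d) / (r ^ (d + 1) + (n : ℝ)) ^ ((d : ℝ) / ((d : ℝ) + 1)))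
      ((r ^ (d + 1) + (n : ℝ)) ^ ((d : ℝ) / ((d : ℝ) + 1) - 1) *
        ((n : ℝ) - (d : ℝ) * (n : ℝ) * r ^ (d - 1) - ((d : ℝ) - 1) * r ^ (d + 1)) /
        ((r ^ (d + 1) + (n : ℝ)) ^ ((d : ℝ) / ((d : ℝ) + 1))) ^ 2) r := by
  obtain ⟨k, rfl⟩ : ∃ k, d = k + 2 := ⟨d - 2, by omega⟩
  set c : ℝ := (↑(k + 2) : ℝ) / ((↑(k + 2) : ℝ) + 1) with hc
  set A : ℝ := r ^ (k + 2 + 1) + (n : ℝ) with hAdef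
  have hd1 : ((k + 2 : ℕ) : ℝ) + 1 ≠ 0 := by positivity
  have hu : HasDerivAt (fun r : ℝ => r ^ (k + 2 + 1) + (n : ℝ))
      ((((k + 2 + 1 : ℕ)) : ℝ) * r ^ (k + 2)) r := by
    simpa using (hasDerivAt_pow (k + 2 + 1) r).add_const (n : ℝ)
  have hv : HasDerivAt (fun x : ℝ => x ^ c) (c * A ^ (c - 1)) A :=
    Real.hasDerivAt_rpow_const (Or.inl hA.ne')
  have hden : HasDerivAt (fun r : ℝ => (r ^ (k + 2 + 1) + (n : ℝ)) ^ c)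
      (c * A ^ (c - 1) * ((((k + 2 + 1 : ℕ)) : ℝ) * r ^ (k + 2))) r := hv.comp (h := fun r : ℝ => r ^ (k + 2 + 1) + (n : ℝ)) r hu
  have htop : HasDerivAt (fun r : ℝ => r - r ^ (k + 2))
      (1 - ((k + 2 : ℕ) : ℝ) * r ^ (k + 1)) r := by
    exact ((hasDerivAt_id' r).sub (hasDerivAt_pow (k + 2) r)).congr_deriv (by push_cast; ring)
  have hne : A ^ c ≠ 0 := (Real.rpow_pos_of_pos hA c).ne'
  have H := htop.div hden hne
  convert H using 1
  · rfl
  · rfl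
  · rfl
  have hAc : A ^ c = A ^ (c - 1) * A := by
    rw [← Real.rpow_add_one hA.ne' (c - 1)]; ring_nf
  have hcd : c * (((k + 2 : ℕ) : ℝ) + 1) = ((k + 2 : ℕ) : ℝ) := by
    rw [hc]; field_simp
  have hnum : A ^ (c - 1) *
      ((n : ℝ) - ((k + 2 : ℕ) : ℝ) * (n : ℝ) * r ^ (k + 2 - 1) -
        (((k + 2 : ℕ) : ℝ) - 1) * r ^ (k + 2 + 1)) =
      (1 - ((k + 2 : ℕ) : ℝ) * r ^ (k + 1)) * A ^ c -
        (r - r ^ (k + 2)) * (c * A ^ (c - 1) * ((((k + 2 + 1 : ℕ)) : ℝ) * r ^ (k + 2))) := by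
    rw [hAc]
    simp only [show k + 2 - 1 = k + 1 from rfl]
    generalize A ^ (c - 1) = B
    rw [hc, hAdef]
    have h0 : ((k : ℝ) + 2) + 1 ≠ 0 := by positivity
    push_cast
    field_simp
    ring
  rw [hnum]

/-- The function `f_{d,n}(r) = (r - r^d)/(r^(d+1)+n)^(d/(d+1))` is strictly increasing on
`[0, ρ]` and strictly decreasing on `[ρ, ∞)`, where `ρ` is the unique positive root of
`(d-1)ρ^(d+1) + d n ρ^(d-1) - n = 0`. -/
theorem f_monotone (d n : ℕ) (hd : 2 ≤ d) (hn : 1 ≤ n) (ρ : ℝ) (hρ : 0 < ρ)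
    (heq : ((d : ℝ) - 1) * ρ ^ (d + 1) + (d : ℝ) * (n : ℝ) * ρ ^ (d - 1) - (n : ℝ) = 0) :
    StrictMonoOn (fun r : ℝ => (r - r ^ d) / (r ^ (d + 1) + (n : ℝ)) ^ ((d : ℝ) / ((d : ℝ) + 1)))
      (Set.Icc 0 ρ) ∧
    StrictAntiOn (fun r : ℝ => (r - r ^ d) / (r ^ (d + 1) + (n : ℝ)) ^ ((d : ℝ) / ((d : ℝ) + 1)))
      (Set.Ici ρ) := by
  have hn' : (0 : ℝ) < n := by exact_mod_cast hn
  have hd' : (1 : ℝ) ≤ (d : ℝ) - 1 := by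
    have : (2 : ℝ) ≤ (d : ℝ) := by exact_mod_cast hd
    linarith
  set f : ℝ → ℝ :=
    fun r : ℝ => (r - r ^ d) / (r ^ (d + 1) + (n : ℝ)) ^ ((d : ℝ) / ((d : ℝ) + 1)) with hf
  have hA : ∀ r : ℝ, 0 ≤ r → 0 < r ^ (d + 1) + (n : ℝ) := fun r hr => by positivity
  -- g is strictly increasing on nonnegatives
  have hg : ∀ a b : ℝ, 0 ≤ a → a < b →
      ((d : ℝ) - 1) * a ^ (d + 1) + (d : ℝ) * (n : ℝ) * a ^ (d - 1) - (n : ℝ) <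
      ((d : ℝ) - 1) * b ^ (d + 1) + (d : ℝ) * (n : ℝ) * b ^ (d - 1) - (n : ℝ) := by
    intro a b ha hab
    have h1 : a ^ (d + 1) < b ^ (d + 1) := pow_lt_pow_left₀ hab ha (by omega)
    have h2 : a ^ (d - 1) ≤ b ^ (d - 1) := pow_le_pow_left₀ ha hab.le _
    have hdn : (0 : ℝ) ≤ (d : ℝ) * (n : ℝ) := by positivity
    nlinarith [mul_le_mul_of_nonneg_left h2 hdn]
  -- sign of derivative
  have hderiv : ∀ r : ℝ, 0 ≤ r → deriv f r =
      (r ^ (d + 1) + (n : ℝ)) ^ ((d : ℝ) / ((d : ℝ) + 1) - 1) *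
        ((n : ℝ) - (d : ℝ) * (n : ℝ) * r ^ (d - 1) - ((d : ℝ) - 1) * r ^ (d + 1)) /
        ((r ^ (d + 1) + (n : ℝ)) ^ ((d : ℝ) / ((d : ℝ) + 1))) ^ 2 :=
    fun r hr => (f_deriv_aux d n hd r (hA r hr)).deriv
  have hcont : ∀ r : ℝ, 0 ≤ r → ContinuousAt f r :=
    fun r hr => (f_deriv_aux d n hd r (hA r hr)).continuousAt
  constructor
  · apply strictMonoOn_of_deriv_pos (convex_Icc 0 ρ)
    · exact fun x hx => (hcont x hx.1).continuousWithinAt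
    · intro x hx
      rw [interior_Icc] at hx
      rw [hderiv x hx.1.le]
      apply div_pos
      · apply mul_pos (Real.rpow_pos_of_pos (hA x hx.1.le) _)
        have := hg x ρ hx.1.le hx.2
        linarith
      · have := Real.rpow_pos_of_pos (hA x hx.1.le) ((d : ℝ) / ((d : ℝ) + 1))
        positivity
  · apply strictAntiOn_of_deriv_neg (convex_Ici ρ)
    · exact fun x hx => (hcont x (hρ.le.trans hx)).continuousWithinAt
    · intro x hx
      rw [interior_Ici] at hx
      have hx0 : (0 : ℝ) ≤ x := (hρ.trans hx).le
      rw [hderiv x hx0]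
      apply div_neg_of_neg_of_pos
      · have h1 := Real.rpow_pos_of_pos (hA x hx0) ((d : ℝ) / ((d : ℝ) + 1) - 1)
        have := hg ρ x hρ.le hx
        nlinarith
      · have := Real.rpow_pos_of_pos (hA x hx0) ((d : ℝ) / ((d : ℝ) + 1))
        positivity
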